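/- With Φ_{n,1}, Φ_{n,2}, Φ_{n,3} given by their eigenvalue formulas on [d] (depending on the pattern entries d_{0j} and parameters x_j, ℏ, ℏ'), the combination (1/(12ℏℏ'))·(-2Φ_{n,3} + 3(ℏ-ℏ')Φ_{n,2} - 2∑_{j=1}^n (x_j+ℏ')³ - 3(ℏ-ℏ')∑_{j=1}^n (x_j+ℏ')²) + ∑_{j=1}^n x_j equals the torus weight ∑_{j=1}^n x_j(1 - ∑_{k≡j mod n} d_{0k}) + (ℏ/2)∑_{j≤0} d_{0j}(d_{0j}-1) + ℏ'∑_{j≤0} d_{0j}⌊-j/n⌋ of the determinant line bundle at the fixed point d, i.e., the first Chern class of D_0 acts by this expression in the Gelfand–Tsetlin elements. -/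
import Mathlib


/-- With `Φ_{n,2}, Φ_{n,3}` given by their eigenvalue formulas on the fixed
point `[d]` (in terms of the pattern entries `d_{0j}` and the parameters `x_j, ℏ, ℏ'`),
the combination
`(1/(12ℏℏ'))(-2Φ_{n,3} + 3(ℏ-ℏ')Φ_{n,2} - 2∑(x_j+ℏ')³ - 3(ℏ-ℏ')∑(x_j+ℏ')²) + ∑ x_j`
equals the torus weight of the determinant line bundle `D_0` at `[d]`. -/
theorem det_line_bundle_weight_from_center
    {F : Type*} [Field F] [CharZero F]
    (n : ℕ) (hn : 0 < n) (hbar hbar' : F) (hb0 : hbar ≠ 0) (hb0' : hbar' ≠ 0)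
    (x : ℤ → F) (hx : ∀ j : ℤ, x (j + n) = x j)
    (N : ℤ) (hN : N ≤ 0) (d : ℤ → ℕ) (hd : ∀ j : ℤ, j < N → d j = 0) :
    let Phi2 : F := (∑ m ∈ Finset.Icc (1:ℤ) n, (x m + hbar')^2)
      - 2 * hbar * hbar' * ∑ j ∈ Finset.Icc N 0, (d j : F);
    let Phi3 : F := -(∑ m ∈ Finset.Icc (1:ℤ) n, (x m + hbar')^3)
      + 3 * hbar * hbar' *
        (2 * ∑ m ∈ Finset.Icc (1:ℤ) n, x m *
            (∑ j ∈ (Finset.Icc N 0).filter (fun j => (j - m) % (n:ℤ) = 0), (d j : F))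
          - (∑ j ∈ Finset.Icc N 0, (d j : F)^2) * hbar
          - (∑ j ∈ Finset.Icc N 0,
              (d j : F) * (2 * ((Int.fdiv (-j) (n:ℤ) : ℤ) : F) - 1)) * hbar');
    (1 / (12 * hbar * hbar')) *
        (-2 * Phi3 + 3 * (hbar - hbar') * Phi2
          - 2 * ∑ m ∈ Finset.Icc (1:ℤ) n, (x m + hbar')^3
          - 3 * (hbar - hbar') * ∑ m ∈ Finset.Icc (1:ℤ) n, (x m + hbar')^2)
      + ∑ m ∈ Finset.Icc (1:ℤ) n, x m
    = ∑ m ∈ Finset.Icc (1:ℤ) n,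
        x m * (1 - ∑ j ∈ (Finset.Icc N 0).filter (fun j => (j - m) % (n:ℤ) = 0), (d j : F))
      + (hbar / 2) * ∑ j ∈ Finset.Icc N 0, (d j : F) * ((d j : F) - 1)
      + hbar' * ∑ j ∈ Finset.Icc N 0, (d j : F) * ((Int.fdiv (-j) (n:ℤ) : ℤ) : F) := by
  intro Phi2 Phi3
  simp only [Phi2, Phi3]
  have h1 : ∑ m ∈ Finset.Icc (1:ℤ) n,
      x m * (1 - ∑ j ∈ (Finset.Icc N 0).filter (fun j => (j - m) % (n:ℤ) = 0), (d j : F))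
      = ∑ m ∈ Finset.Icc (1:ℤ) n, x m
        - ∑ m ∈ Finset.Icc (1:ℤ) n, x m *
            (∑ j ∈ (Finset.Icc N 0).filter (fun j => (j - m) % (n:ℤ) = 0), (d j : F)) := by
    rw [← Finset.sum_sub_distrib]
    exact Finset.sum_congr rfl fun m _ => by ring
  have h2 : ∑ j ∈ Finset.Icc N 0, (d j : F) * ((d j : F) - 1)
      = (∑ j ∈ Finset.Icc N 0, (d j : F)^2) - ∑ j ∈ Finset.Icc N 0, (d j : F) := by
    rw [← Finset.sum_sub_distrib]
    exact Finset.sum_congr rfl fun j _ => by ring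
  have h3 : ∑ j ∈ Finset.Icc N 0, (d j : F) * (2 * ((Int.fdiv (-j) (n:ℤ) : ℤ) : F) - 1)
      = 2 * (∑ j ∈ Finset.Icc N 0, (d j : F) * ((Int.fdiv (-j) (n:ℤ) : ℤ) : F))
        - ∑ j ∈ Finset.Icc N 0, (d j : F) := by
    rw [Finset.mul_sum, ← Finset.sum_sub_distrib]
    exact Finset.sum_congr rfl fun j _ => by ring
  rw [h1, h3]
  field_simp
  linear_combination (-12 * hbar^2 * hbar') * h2
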